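/- For all t > 0, log((1+t)/(2*sqrt(t))) ≤ (1/8) * (t-1)^2 / t. -/

import Mathlib

/-- For all t > 0, log((1+t)/(2√t)) ≤ (1/8)·(t-1)²/t. -/
theorem stmt0 (t : ℝ) (ht : 0 < t) :
    Real.log ((1 + t) / (2 * Real.sqrt t)) ≤ (1 / 8) * ((t - 1) ^ 2 / t) := by
  set s := Real.sqrt t with hs
  have hs0 : 0 < s := Real.sqrt_pos.mpr ht
  have hst : s ^ 2 = t := Real.sq_sqrt ht.le
  have hpos : 0 < (1 + t) / (2 * s) := by positivity
  calc Real.log ((1 + t) / (2 * s)) ≤ (1 + t) / (2 * s) - 1 :=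
        Real.log_le_sub_one_of_pos hpos
    _ ≤ (1 / 8) * ((t - 1) ^ 2 / t) := by
        rw [← hst]
        rw [sub_le_iff_le_add, div_le_iff₀ (by positivity), ← sub_nonneg]
        have h := mul_nonneg hs0.le (sq_nonneg ((s - 1) ^ 2))
        have h2 : (0:ℝ) < s ^ 2 := by positivity
        field_simp
        nlinarith [h, sq_nonneg (s - 1), sq_nonneg (s + 1)]
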